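/- Let X be a T1 topological space and Y a topological space. Then the graph topology τ_Γ on C(X,Y) coincides with the topology that C(X,Y) inherits from the Vietoris topology on the hyperspace of nonempty closed subsets of X × Y, under the embedding sending each continuous function f to its graph {(x, f(x)) : x ∈ X}. -/

import Mathlib

open TopologicalSpace Set

/-- The graph of a continuous map, as a subset of `X × Y`. -/
def graphSet {X Y : Type*} [TopologicalSpace X] [TopologicalSpace Y] (f : C(X, Y)) :
    Set (X × Y) := {p | p.2 = f p.1}

/-- The graph topology `τ_Γ` on `C(X, Y)`, generated by the sets
`F_G = {f | graph f ⊆ G}` for `G` open in `X × Y`. -/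
def graphTopology (X Y : Type*) [TopologicalSpace X] [TopologicalSpace Y] :
    TopologicalSpace C(X, Y) :=
  generateFrom {S | ∃ G : Set (X × Y), IsOpen G ∧ S = {f : C(X, Y) | graphSet f ⊆ G}}

/-- The hyperspace of nonempty closed subsets of a topological space `Z`. -/
def NonemptyCloseds (Z : Type*) [TopologicalSpace Z] : Type _ :=
  {C : Set Z // IsClosed C ∧ C.Nonempty}

/-- The Vietoris topology on the hyperspace of nonempty closed subsets of `Z`,
generated by the sets `{A | A ⊆ G}` and `{A | A ∩ G ≠ ∅}` for `G` open in `Z`. -/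
def vietorisTopology (Z : Type*) [TopologicalSpace Z] :
    TopologicalSpace (NonemptyCloseds Z) :=
  generateFrom {S | ∃ G : Set Z, IsOpen G ∧
    (S = {A : NonemptyCloseds Z | A.1 ⊆ G} ∨
     S = {A : NonemptyCloseds Z | (A.1 ∩ G).Nonempty})}

/-- For `Y` Hausdorff, the graph of a continuous map is closed in `X × Y`. -/
lemma isClosed_graphSet {X Y : Type*} [TopologicalSpace X] [TopologicalSpace Y]
    [T2Space Y] (f : C(X, Y)) : IsClosed (graphSet f) :=
  isClosed_eq continuous_snd (f.continuous.comp continuous_fst)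

lemma graphSet_nonempty {X Y : Type*} [TopologicalSpace X] [TopologicalSpace Y]
    [Nonempty X] (f : C(X, Y)) : (graphSet f).Nonempty :=
  ⟨(Classical.arbitrary X, f (Classical.arbitrary X)), rfl⟩

/-- For `X` a T₁ space (and `Y` Hausdorff, `X` nonempty, so that the
graph embedding into the hyperspace of nonempty closed subsets of `X × Y` is well
defined), the graph topology on `C(X, Y)` coincides with the topology induced from
the Vietoris topology under the embedding `f ↦ graph f`. -/
theorem graphTopology_eq_induced_vietoris (X Y : Type*) [TopologicalSpace X]
    [TopologicalSpace Y] [T1Space X] [T2Space Y] [Nonempty X] :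
    graphTopology X Y =
      TopologicalSpace.induced
        (fun f : C(X, Y) =>
          (⟨graphSet f, isClosed_graphSet f, graphSet_nonempty f⟩ : NonemptyCloseds (X × Y)))
        (vietorisTopology (X × Y)) := by
  set ι : C(X, Y) → NonemptyCloseds (X × Y) := fun f : C(X, Y) =>
    (⟨graphSet f, isClosed_graphSet f, graphSet_nonempty f⟩ : NonemptyCloseds (X × Y)) with hι
  change graphTopology X Y = induced ι (generateFrom {S : Set (NonemptyCloseds (X × Y)) | ∃ G : Set (X × Y), IsOpen G ∧ (S = {A : NonemptyCloseds (X × Y) | A.1 ⊆ G} ∨ S = {A : NonemptyCloseds (X × Y) | (A.1 ∩ G).Nonempty})})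
  rw [induced_generateFrom_eq]
  apply le_antisymm
  · apply le_generateFrom
    rintro S ⟨T, ⟨G, hG, hT⟩, rfl⟩
    rcases hT with rfl | rfl
    · exact isOpen_generateFrom_of_mem ⟨G, hG, rfl⟩
    · have : ι ⁻¹' {A : NonemptyCloseds (X × Y) | (A.1 ∩ G).Nonempty}
          = ⋃ x : X, {f : C(X, Y) | graphSet f ⊆ G ∪ (({x}ᶜ : Set X) ×ˢ (univ : Set Y))} := by
        ext f
        simp only [mem_preimage, mem_iUnion, mem_setOf_eq]
        constructor
        · rintro ⟨⟨x, y⟩, hmem, hGm⟩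
          have hy : y = f x := hmem
          subst hy
          refine ⟨x, fun p hp => ?_⟩
          by_cases hx : p.1 = x
          · left
            have : p = (x, f x) := by
              have hp2 : p.2 = f p.1 := hp
              rw [Prod.ext_iff]
              exact ⟨hx, by rw [hp2, hx]⟩
            rw [this]; exact hGm
          · right
            exact ⟨hx, mem_univ _⟩
        · rintro ⟨x, hsub⟩
          have hx : (x, f x) ∈ G ∪ (({x}ᶜ : Set X) ×ˢ (univ : Set Y)) := hsub rfl
          rcases hx with h | h
          · exact ⟨(x, f x), rfl, h⟩
          · exact absurd rfl h.1
      rw [this]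
      letI : TopologicalSpace C(X, Y) := graphTopology X Y
      apply isOpen_iUnion
      intro x
      exact isOpen_generateFrom_of_mem
        ⟨G ∪ (({x}ᶜ : Set X) ×ˢ (univ : Set Y)),
          hG.union ((isClosed_singleton.isOpen_compl).prod isOpen_univ), rfl⟩
  · apply le_generateFrom
    rintro S ⟨G, hG, rfl⟩
    exact isOpen_generateFrom_of_mem
      ⟨{A : NonemptyCloseds (X × Y) | A.1 ⊆ G}, ⟨G, hG, Or.inl rfl⟩, rfl⟩
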